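/- Every finite 2-subgroup of GL₂(ℤ) (a finite subgroup whose order is a power of 2) is conjugate in GL₂(ℤ) to a subgroup of 𝒢₂ = ⟨[[−1,0],[0,1]], [[0,1],[1,0]]⟩, which is a dihedral group of order 8. -/

import Mathlib

open Matrix

/-- The element `[[0,1],[1,0]]` of `GL₂(ℤ)`. -/
def matS : GL (Fin 2) ℤ := ⟨!![0, 1; 1, 0], !![0, 1; 1, 0], by decide, by decide⟩

/-- The element `[[-1,0],[0,1]]` of `GL₂(ℤ)`. -/
def matR : GL (Fin 2) ℤ := ⟨!![-1, 0; 0, 1], !![-1, 0; 0, 1], by decide, by decide⟩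

/-- The subgroup `𝒢₂ = ⟨[[-1,0],[0,1]], [[0,1],[1,0]]⟩` of `GL₂(ℤ)`. -/
def G2 : Subgroup (GL (Fin 2) ℤ) := Subgroup.closure {matR, matS}

def rotU : GL (Fin 2) ℤ := ⟨!![0, -1; 1, 0], !![0, 1; -1, 0], by decide, by decide⟩
def s2U : GL (Fin 2) ℤ := ⟨!![-1, -1; 0, 1], !![-1, -1; 0, 1], by decide, by decide⟩
def s2pU : GL (Fin 2) ℤ := ⟨!![1, 0; -1, -1], !![1, 0; -1, -1], by decide, by decide⟩
def wU : GL (Fin 2) ℤ := ⟨!![-1, -1; 1, 0], !![0, 1; -1, -1], by decide, by decide⟩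
def w2U : GL (Fin 2) ℤ := ⟨!![0, 1; -1, -1], !![-1, -1; 1, 0], by decide, by decide⟩
def u0 : GL (Fin 2) ℤ := ⟨!![0, -1; 1, 1], !![1, 1; -1, 0], by decide, by decide⟩
def u1 : GL (Fin 2) ℤ := ⟨!![1, 1; 0, -1], !![1, 1; 0, -1], by decide, by decide⟩

instance : DecidableEq (GL (Fin 2) ℤ) := fun x y =>
  decidable_of_iff (x.val = y.val) Units.val_inj









lemma memR : matR ∈ G2 := Subgroup.subset_closure (by simp)
lemma memS : matS ∈ G2 := Subgroup.subset_closure (by simp)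
lemma memRot : rotU ∈ G2 := by
  have : matR * matS = rotU := by ext1; decide
  exact this ▸ mul_mem memR memS

def dihToGL : DihedralGroup 4 →* GL (Fin 2) ℤ where
  toFun x := match x with
    | .r i => rotU ^ i.val
    | .sr i => matS * rotU ^ i.val
  map_one' := by decide
  map_mul' := by decide

lemma dihInj : Function.Injective dihToGL := by decide

lemma dihRange : dihToGL.range = G2 := by
  apply le_antisymm
  · rintro x ⟨y, rfl⟩
    match y with
    | .r i => exact pow_mem memRot _
    | .sr i => exact mul_mem memS (pow_mem memRot _)
  · rw [G2]
    rw [Subgroup.closure_le]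
    rintro x (rfl | rfl)
    · exact ⟨.sr 3, by decide⟩
    · exact ⟨.sr 0, by decide⟩

lemma part1 : Nonempty (G2 ≃* DihedralGroup 4) :=
  ⟨((MonoidHom.ofInjective dihInj).trans (MulEquiv.subgroupCongr dihRange)).symm⟩





/-- the shear `[[1,t],[0,1]]` as a unit -/
def shear (t : ℤ) : GL (Fin 2) ℤ :=
  ⟨!![1, t; 0, 1], !![1, -t; 0, 1],
   by rw [Matrix.mul_fin_two, Matrix.one_fin_two]; norm_num,
   by rw [Matrix.mul_fin_two, Matrix.one_fin_two]; norm_num⟩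

lemma shear_valT (t : ℤ) : ((shear t).val)ᵀ = !![1, 0; t, 1] := by
  ext i j; fin_cases i <;> fin_cases j <;> rfl

lemma matS_valT : (matS.val)ᵀ = !![0, 1; 1, 0] := by
  ext i j; fin_cases i <;> fin_cases j <;> rfl

lemma matR_valT : (matR.val)ᵀ = !![-1, 0; 0, 1] := by
  ext i j; fin_cases i <;> fin_cases j <;> rfl

lemma congr_shear (a b c t : ℤ) :
    ((shear t).val)ᵀ * !![a,b;b,c] * (shear t).val
      = !![a, a*t+b; a*t+b, a*t*t + 2*b*t + c] := by
  rw [shear_valT, shear, Matrix.mul_fin_two, Matrix.mul_fin_two]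
  congr 1 <;> ring_nf

lemma congr_matS (a b c : ℤ) :
    (matS.val)ᵀ * !![a,b;b,c] * matS.val = !![c,b;b,a] := by
  rw [matS_valT, matS, Matrix.mul_fin_two, Matrix.mul_fin_two]; norm_num

lemma congr_matR (a b c : ℤ) :
    (matR.val)ᵀ * !![a,b;b,c] * matR.val = !![a,-b;-b,c] := by
  rw [matR_valT, matR, Matrix.mul_fin_two, Matrix.mul_fin_two]; norm_num

lemma congr_mul (A : Matrix (Fin 2) (Fin 2) ℤ) (g h : GL (Fin 2) ℤ) :
    ((g*h).val)ᵀ * A * (g*h).val = (h.val)ᵀ * ((g.val)ᵀ * A * g.val) * h.val := by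
  rw [Units.val_mul, Matrix.transpose_mul]
  noncomm_ring

lemma reduce : ∀ (n : ℕ) (a b c : ℤ), 0 < a → 0 < a*c - b*b → a ≤ c → (a+c).toNat ≤ n →
    ∃ (g : GL (Fin 2) ℤ) (a' b' c' : ℤ),
      (g.val)ᵀ * !![a,b;b,c] * g.val = !![a',b';b',c'] ∧
      0 < a' ∧ 0 ≤ 2*b' ∧ 2*b' ≤ a' ∧ a' ≤ c' := by
  intro n
  induction n with
  | zero => intro a b c ha hD hac hn; exfalso; omega
  | succ n ih =>
    intro a b c ha hD hac hn
    by_cases hb : 2 * |b| ≤ a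
    · rcases le_or_gt 0 b with hb0 | hb0
      · exact ⟨1, a, b, c, by simp, ha, by omega, by rw [abs_of_nonneg hb0] at hb; omega, hac⟩
      · refine ⟨matR, a, -b, c, congr_matR a b c, ha, by omega, ?_, hac⟩
        rw [abs_of_neg hb0] at hb; omega
    · -- translate
      set q : ℤ := (2*b + a) / (2*a) with hq
      have h2a : (0:ℤ) < 2*a := by omega
      have hmod := Int.emod_emod_of_dvd
      have hdm := Int.mul_ediv_add_emod (2*b + a) (2*a)
      have hmn : 0 ≤ (2*b + a) % (2*a) := Int.emod_nonneg _ (by omega)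
      have hmx : (2*b + a) % (2*a) < 2*a := Int.emod_lt_of_pos _ h2a
      set t : ℤ := -q with ht
      set b' : ℤ := a*t + b with hb'
      have hkey : 2*b' = (2*b + a) % (2*a) - a := by
        rw [hb', ht]; linear_combination -hdm
      have hb'b : -a ≤ 2*b' ∧ 2*b' < a := by omega
      set c' : ℤ := a*t*t + 2*b*t + c with hc'
      have hD' : a*c' - b'*b' = a*c - b*b := by rw [hb', hc']; ring
      have habs : 2*|b'| ≤ a := by rcases abs_cases b' with ⟨h1,h2⟩|⟨h1,h2⟩ <;> omega
      have hbb : |b'| < |b| := by omega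
      have hc'c : c' < c := by
        have h1 : a * c' < a * c := by nlinarith [abs_nonneg b, abs_nonneg b', sq_abs b, sq_abs b']
        exact lt_of_mul_lt_mul_left h1 (le_of_lt ha)
      have hc'pos : 0 < c' := by nlinarith
      rcases le_or_gt a c' with hac' | hac'
      · -- done after translation (+ sign fix)
        rcases le_or_gt 0 b' with hb0 | hb0
        · exact ⟨shear t, a, b', c', congr_shear a b c t, ha, by omega, by omega, hac'⟩
        · refine ⟨shear t * matR, a, -b', c', ?_, ha, by omega, by omega, hac'⟩
          rw [congr_mul, congr_shear, congr_matR]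
      · -- swap and recurse
        obtain ⟨g₂, a₂, b₂, c₂, hg₂, h1, h2, h3, h4⟩ :=
          ih c' b' a hc'pos (by rw [mul_comm]; omega) (le_of_lt hac') (by omega)
        refine ⟨shear t * matS * g₂, a₂, b₂, c₂, ?_, h1, h2, h3, h4⟩
        rw [congr_mul, congr_mul, congr_shear, congr_matS, hg₂]


set_option maxHeartbeats 2000000 in
lemma sols (a b c p q r s : ℤ) (ha : 0 < a) (hb0 : 0 ≤ 2*b) (hba : 2*b ≤ a) (hac : a ≤ c)
    (hD : 0 < a*c - b*b)
    (hdet : p*s - q*r = 1 ∨ p*s - q*r = -1)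
    (e1 : a*p*p + 2*b*p*r + c*r*r = a)
    (e2 : a*p*q + b*p*s + b*q*r + c*r*s = b)
    (e3 : a*q*q + 2*b*q*s + c*s*s = c) :
    (p=1∧q=0∧r=0∧s=1) ∨ (p=-1∧q=0∧r=0∧s=-1)
    ∨ (b=0 ∧ ((p=1∧q=0∧r=0∧s=-1) ∨ (p=-1∧q=0∧r=0∧s=1)))
    ∨ (a=c ∧ ((p=0∧q=1∧r=1∧s=0) ∨ (p=0∧q=-1∧r=-1∧s=0)))
    ∨ (b=0 ∧ a=c ∧ ((p=0∧q=-1∧r=1∧s=0) ∨ (p=0∧q=1∧r=-1∧s=0)))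
    ∨ (a=2*b ∧ ((p=-1∧q=-1∧r=0∧s=1) ∨ (p=1∧q=1∧r=0∧s=-1)))
    ∨ (a=2*b ∧ a=c ∧ ((p=1∧q=0∧r=-1∧s=-1) ∨ (p=-1∧q=0∧r=1∧s=1)))
    ∨ (a=2*b ∧ a=c ∧ ((p=-1∧q=-1∧r=1∧s=0) ∨ (p=1∧q=1∧r=-1∧s=0)
        ∨ (p=0∧q=1∧r=-1∧s=-1) ∨ (p=0∧q=-1∧r=1∧s=1))) := by
  have hc : 0 < c := by omega
  have hac2 : a*a ≤ a*c := by nlinarith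
  have hbb : 4*(b*b) ≤ a*a := by nlinarith
  have hDnn : 0 ≤ a*c - b*b := le_of_lt hD
  have k1 : (a*p + b*r)^2 + (a*c - b*b)*(r*r) = a*a := by linear_combination a * e1
  have k3 : (a*q + b*s)^2 + (a*c - b*b)*(s*s) = a*c := by linear_combination a * e3
  have hr : -1 ≤ r ∧ r ≤ 1 := by
    by_contra h
    have h4 : 4 ≤ r*r := by
      rcases (not_and_or.mp h) with h' | h' <;> push_neg at h' <;> nlinarith
    nlinarith [mul_le_mul_of_nonneg_left h4 hDnn, sq_nonneg (a*p + b*r)]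
  have hs : -1 ≤ s ∧ s ≤ 1 := by
    by_contra h
    have h4 : 4 ≤ s*s := by
      rcases (not_and_or.mp h) with h' | h' <;> push_neg at h' <;> nlinarith
    nlinarith [mul_le_mul_of_nonneg_left h4 hDnn, sq_nonneg (a*q + b*s)]
  have hbr : -(2*b) ≤ 2*(b*r) ∧ 2*(b*r) ≤ 2*b := by
    obtain ⟨h1, h2⟩ := hr; constructor <;> nlinarith
  have habs : (a*p + b*r)^2 ≤ a*a := by nlinarith [mul_nonneg hDnn (mul_self_nonneg r)]
  have habs1 : -a ≤ a*p + b*r := by nlinarith [sq_nonneg (a*p + b*r + a)]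
  have habs2 : a*p + b*r ≤ a := by nlinarith [sq_nonneg (a*p + b*r - a)]
  have hp : -1 ≤ p ∧ p ≤ 1 := by
    by_contra h
    rcases (not_and_or.mp h) with h' | h' <;> push_neg at h' <;>
      [(have : 2*(a*p) ≤ -(4*a) := by nlinarith); (have : 4*a ≤ 2*(a*p) := by nlinarith)] <;>
      omega
  clear k1 habs habs1 habs2 hbr
  have hq : -1 ≤ q ∧ q ≤ 1 := by
    obtain ⟨hs1, hs2⟩ := hs
    interval_cases s
    · have hfac : q * (a*q - 2*b) = 0 := by linear_combination e3
      rcases mul_eq_zero.mp hfac with h0 | h0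
      · omega
      · have h0' : a*q = 2*b := by omega
        constructor <;> nlinarith [h0', ha, hb0, hba]
    · obtain ⟨hr1, hr2⟩ := hr; obtain ⟨hp1, hp2⟩ := hp
      interval_cases r <;> omega
    · have hfac : q * (a*q + 2*b) = 0 := by linear_combination e3
      rcases mul_eq_zero.mp hfac with h0 | h0
      · omega
      · have h0' : a*q = -(2*b) := by omega
        constructor <;> nlinarith [h0', ha, hb0, hba]
  clear k3 hD hDnn hac2 hbb
  obtain ⟨hp1, hp2⟩ := hp; obtain ⟨hq1, hq2⟩ := hq
  obtain ⟨hr1, hr2⟩ := hr; obtain ⟨hs1, hs2⟩ := hs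
  have Dp : p = -1 ∨ p = 0 ∨ p = 1 := by omega
  have Dq : q = -1 ∨ q = 0 ∨ q = 1 := by omega
  have Dr : r = -1 ∨ r = 0 ∨ r = 1 := by omega
  have Ds : s = -1 ∨ s = 0 ∨ s = 1 := by omega
  clear hp1 hp2 hq1 hq2 hr1 hr2 hs1 hs2 hc
  rcases Dp with rfl|rfl|rfl <;> rcases Dq with rfl|rfl|rfl <;>
    rcases Dr with rfl|rfl|rfl <;> rcases Ds with rfl|rfl|rfl <;> norm_num <;> omega











lemma memN1 : (-1 : GL (Fin 2) ℤ) ∈ G2 := by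
  have : rotU * rotU = -1 := by decide
  exact this ▸ mul_mem memRot memRot
lemma memNR : -matR ∈ G2 := by
  have : (-1 : GL (Fin 2) ℤ) * matR = -matR := by decide
  exact this ▸ mul_mem memN1 memR
lemma memNS : -matS ∈ G2 := by
  have : (-1 : GL (Fin 2) ℤ) * matS = -matS := by decide
  exact this ▸ mul_mem memN1 memS
lemma memNRot : -rotU ∈ G2 := by
  have : (-1 : GL (Fin 2) ℤ) * rotU = -rotU := by decide
  exact this ▸ mul_mem memN1 memRot



lemma cube_pow2 (k : ℕ) : ∀ (x : GL (Fin 2) ℤ), x^3 = 1 → x ≠ 1 → x^(2^k) ≠ 1 := by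
  induction k with
  | zero => intro x h3 h1; simpa using h1
  | succ n ih =>
    intro x h3 h1
    have h3' : (x^2)^3 = 1 := by rw [← pow_mul, mul_comm, pow_mul, h3, one_pow]
    have h1' : x^2 ≠ 1 := by
      intro h
      exact h1 (by rw [← h3, pow_succ, h, one_mul])
    have hrw : x^(2^(n+1)) = (x^2)^(2^n) := by
      rw [← pow_mul]
      congr 1
      ring
    rw [hrw]
    exact ih (x^2) h3' h1'

lemma no2pow (x : GL (Fin 2) ℤ) (hx1 : x ≠ 1) (hx2 : (x^2)^3 = 1) (hx3 : x^2 ≠ 1) (k : ℕ) :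
    x^(2^k) ≠ 1 := by
  cases k with
  | zero => simpa using hx1
  | succ n =>
    have hrw : x^(2^(n+1)) = (x^2)^(2^n) := by
      rw [← pow_mul]; congr 1; ring
    rw [hrw]
    exact cube_pow2 n (x^2) hx2 hx3

lemma classify (a b c : ℤ) (ha : 0 < a) (hb0 : 0 ≤ 2*b) (hba : 2*b ≤ a) (hac : a ≤ c)
    (hD : 0 < a*c - b*b) (M : GL (Fin 2) ℤ)
    (hfix : (M.val)ᵀ * !![a,b;b,c] * M.val = !![a,b;b,c]) :
    M = 1 ∨ M = -1
    ∨ (b=0 ∧ (M = -matR ∨ M = matR))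
    ∨ (a=c ∧ (M = matS ∨ M = -matS))
    ∨ (b=0 ∧ a=c ∧ (M = rotU ∨ M = -rotU))
    ∨ (a=2*b ∧ (M = s2U ∨ M = -s2U))
    ∨ (a=2*b ∧ a=c ∧ (M = s2pU ∨ M = -s2pU))
    ∨ (a=2*b ∧ a=c ∧ (M = wU ∨ M = -wU ∨ M = w2U ∨ M = -w2U)) := by
  obtain ⟨p, q, r, s, hMv⟩ : ∃ p q r s, M.val = !![p,q;r,s] := ⟨_,_,_,_, Matrix.eta_fin_two _⟩
  have hdetU : IsUnit (M.val.det) := (Matrix.isUnit_iff_isUnit_det _).mp M.isUnit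
  rw [hMv, Matrix.det_fin_two_of] at hdetU
  have hdet : p*s - q*r = 1 ∨ p*s - q*r = -1 := Int.isUnit_iff.mp hdetU
  rw [hMv] at hfix
  rw [show (!![p,q;r,s])ᵀ = !![p,r;q,s] from by ext i j; fin_cases i <;> fin_cases j <;> rfl]
    at hfix
  rw [Matrix.mul_fin_two, Matrix.mul_fin_two] at hfix
  rw [← Matrix.ext_iff] at hfix
  have h00 := hfix 0 0
  have h01 := hfix 0 1
  have h11 := hfix 1 1
  simp [Matrix.cons_val_zero, Matrix.cons_val_one] at h00 h01 h11
  have e1 : a*p*p + 2*b*p*r + c*r*r = a := by linear_combination h00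
  have e2 : a*p*q + b*p*s + b*q*r + c*r*s = b := by linear_combination h01
  have e3 : a*q*q + 2*b*q*s + c*s*s = c := by linear_combination h11
  have hM1 : ∀ x1 x2 x3 x4 : ℤ, p = x1 → q = x2 → r = x3 → s = x4 → M.val = !![x1,x2;x3,x4] := by
    rintro x1 x2 x3 x4 rfl rfl rfl rfl; exact hMv
  rcases sols a b c p q r s ha hb0 hba hac hD hdet e1 e2 e3 with
    ⟨h1,h2,h3,h4⟩ | ⟨h1,h2,h3,h4⟩ | ⟨hb, ⟨h1,h2,h3,h4⟩ | ⟨h1,h2,h3,h4⟩⟩ |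
    ⟨hc, ⟨h1,h2,h3,h4⟩ | ⟨h1,h2,h3,h4⟩⟩ | ⟨hb, hc, ⟨h1,h2,h3,h4⟩ | ⟨h1,h2,h3,h4⟩⟩ |
    ⟨h2b, ⟨h1,h2,h3,h4⟩ | ⟨h1,h2,h3,h4⟩⟩ | ⟨h2b, hc, ⟨h1,h2,h3,h4⟩ | ⟨h1,h2,h3,h4⟩⟩ |
    ⟨h2b, hc, ⟨h1,h2,h3,h4⟩ | ⟨h1,h2,h3,h4⟩ | ⟨h1,h2,h3,h4⟩ | ⟨h1,h2,h3,h4⟩⟩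
  · exact Or.inl (Units.ext (by rw [hM1 _ _ _ _ h1 h2 h3 h4]; decide))
  · exact Or.inr (Or.inl (Units.ext (by rw [hM1 _ _ _ _ h1 h2 h3 h4]; decide)))
  · exact Or.inr (Or.inr (Or.inl ⟨hb, Or.inl (Units.ext (by rw [hM1 _ _ _ _ h1 h2 h3 h4]; decide))⟩))
  · exact Or.inr (Or.inr (Or.inl ⟨hb, Or.inr (Units.ext (by rw [hM1 _ _ _ _ h1 h2 h3 h4]; decide))⟩))
  · exact Or.inr (Or.inr (Or.inr (Or.inl ⟨hc, Or.inl (Units.ext (by rw [hM1 _ _ _ _ h1 h2 h3 h4]; decide))⟩)))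
  · exact Or.inr (Or.inr (Or.inr (Or.inl ⟨hc, Or.inr (Units.ext (by rw [hM1 _ _ _ _ h1 h2 h3 h4]; decide))⟩)))
  · exact Or.inr (Or.inr (Or.inr (Or.inr (Or.inl ⟨hb, hc, Or.inl (Units.ext (by rw [hM1 _ _ _ _ h1 h2 h3 h4]; decide))⟩))))
  · exact Or.inr (Or.inr (Or.inr (Or.inr (Or.inl ⟨hb, hc, Or.inr (Units.ext (by rw [hM1 _ _ _ _ h1 h2 h3 h4]; decide))⟩))))
  · exact Or.inr (Or.inr (Or.inr (Or.inr (Or.inr (Or.inl ⟨h2b, Or.inl (Units.ext (by rw [hM1 _ _ _ _ h1 h2 h3 h4]; decide))⟩)))))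
  · exact Or.inr (Or.inr (Or.inr (Or.inr (Or.inr (Or.inl ⟨h2b, Or.inr (Units.ext (by rw [hM1 _ _ _ _ h1 h2 h3 h4]; decide))⟩)))))
  · exact Or.inr (Or.inr (Or.inr (Or.inr (Or.inr (Or.inr (Or.inl ⟨h2b, hc, Or.inl (Units.ext (by rw [hM1 _ _ _ _ h1 h2 h3 h4]; decide))⟩))))))
  · exact Or.inr (Or.inr (Or.inr (Or.inr (Or.inr (Or.inr (Or.inl ⟨h2b, hc, Or.inr (Units.ext (by rw [hM1 _ _ _ _ h1 h2 h3 h4]; decide))⟩))))))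
  · exact Or.inr (Or.inr (Or.inr (Or.inr (Or.inr (Or.inr (Or.inr ⟨h2b, hc, Or.inl (Units.ext (by rw [hM1 _ _ _ _ h1 h2 h3 h4]; decide))⟩))))))
  · exact Or.inr (Or.inr (Or.inr (Or.inr (Or.inr (Or.inr (Or.inr ⟨h2b, hc, Or.inr (Or.inl (Units.ext (by rw [hM1 _ _ _ _ h1 h2 h3 h4]; decide)))⟩))))))
  · exact Or.inr (Or.inr (Or.inr (Or.inr (Or.inr (Or.inr (Or.inr ⟨h2b, hc, Or.inr (Or.inr (Or.inl (Units.ext (by rw [hM1 _ _ _ _ h1 h2 h3 h4]; decide))))⟩))))))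
  · exact Or.inr (Or.inr (Or.inr (Or.inr (Or.inr (Or.inr (Or.inr ⟨h2b, hc, Or.inr (Or.inr (Or.inr (Units.ext (by rw [hM1 _ _ _ _ h1 h2 h3 h4]; decide))))⟩))))))

lemma conj_one (u : GL (Fin 2) ℤ) : u⁻¹ * 1 * u ∈ G2 := by
  simpa using one_mem G2

lemma conj_neg_one (u : GL (Fin 2) ℤ) : u⁻¹ * (-1) * u ∈ G2 := by
  have h : u⁻¹ * (-1) * u = -1 := by
    simp [mul_neg, neg_mul]
  rw [h]; exact memN1

lemma endgame (a b c : ℤ) (ha : 0 < a) (hb0 : 0 ≤ 2*b) (hba : 2*b ≤ a) (hac : a ≤ c)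
    (hD : 0 < a*c - b*b) (K : Subgroup (GL (Fin 2) ℤ)) (hpK : IsPGroup 2 K)
    (hfix : ∀ M ∈ K, (M : GL (Fin 2) ℤ).valᵀ * !![a,b;b,c] * (M : GL (Fin 2) ℤ).val = !![a,b;b,c]) :
    ∃ u : GL (Fin 2) ℤ, ∀ M ∈ K, u⁻¹ * M * u ∈ G2 := by
  -- order-3 style elements excluded from K
  have hexcl : ∀ N, N ∈ K → ¬(N = wU ∨ N = -wU ∨ N = w2U ∨ N = -w2U) := by
    intro N hN hNe
    obtain ⟨k, hk⟩ := hpK ⟨N, hN⟩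
    have hk' : N ^ (2^k) = 1 := by
      have := congrArg (fun z : K => (z : GL (Fin 2) ℤ)) hk
      simpa using this
    rcases hNe with rfl | rfl | rfl | rfl <;>
      exact no2pow _ (by decide) (by decide) (by decide) k hk'
  by_cases h2b : a = 2*b
  · have hbne : ¬ b = 0 := by omega
    by_cases hc : a = c
    · -- hexagonal case
      have hcl : ∀ M, M ∈ K → M = 1 ∨ M = -1 ∨ M = matS ∨ M = -matS ∨ M = s2U ∨ M = -s2U
          ∨ M = s2pU ∨ M = -s2pU := by
        intro M hM
        rcases classify a b c ha hb0 hba hac hD M (hfix M hM) with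
          h | h | ⟨hb, h⟩ | ⟨_, h | h⟩ | ⟨hb, _, _⟩ | ⟨_, h | h⟩ | ⟨_, _, h | h⟩ | ⟨_, _, h⟩
        · exact Or.inl h
        · exact Or.inr (Or.inl h)
        · exact absurd hb hbne
        · exact Or.inr (Or.inr (Or.inl h))
        · exact Or.inr (Or.inr (Or.inr (Or.inl h)))
        · exact absurd hb hbne
        · exact Or.inr (Or.inr (Or.inr (Or.inr (Or.inl h))))
        · exact Or.inr (Or.inr (Or.inr (Or.inr (Or.inr (Or.inl h)))))
        · exact Or.inr (Or.inr (Or.inr (Or.inr (Or.inr (Or.inr (Or.inl h))))))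
        · exact Or.inr (Or.inr (Or.inr (Or.inr (Or.inr (Or.inr (Or.inr h))))))
        · exact absurd h (hexcl M hM)
      by_cases hs2 : ∃ N ∈ K, N = s2U ∨ N = -s2U
      · obtain ⟨N₀, hN₀K, hN₀⟩ := hs2
        refine ⟨u0, fun M hM => ?_⟩
        rcases hcl M hM with rfl | rfl | rfl | rfl | rfl | rfl | rfl | rfl
        · exact conj_one u0
        · exact conj_neg_one u0
        · -- matS together with s2U-type gives order 3 element
          exfalso
          rcases hN₀ with rfl | rfl
          · exact hexcl _ (mul_mem hM hN₀K) (Or.inr (Or.inr (Or.inl (by decide))))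
          · exact hexcl _ (mul_mem hM hN₀K) (Or.inr (Or.inr (Or.inr (by decide))))
        · exfalso
          rcases hN₀ with rfl | rfl
          · exact hexcl _ (mul_mem hM hN₀K) (Or.inr (Or.inr (Or.inr (by decide))))
          · exact hexcl _ (mul_mem hM hN₀K) (Or.inr (Or.inr (Or.inl (by decide))))
        · rw [show u0⁻¹ * s2U * u0 = matS by decide]; exact memS
        · rw [show u0⁻¹ * (-s2U) * u0 = -matS by decide]; exact memNS
        · exfalso
          rcases hN₀ with rfl | rfl
          · exact hexcl _ (mul_mem hM hN₀K) (Or.inl (by decide))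
          · exact hexcl _ (mul_mem hM hN₀K) (Or.inr (Or.inl (by decide)))
        · exfalso
          rcases hN₀ with rfl | rfl
          · exact hexcl _ (mul_mem hM hN₀K) (Or.inr (Or.inl (by decide)))
          · exact hexcl _ (mul_mem hM hN₀K) (Or.inl (by decide))
      · by_cases hs2p : ∃ N ∈ K, N = s2pU ∨ N = -s2pU
        · obtain ⟨N₀, hN₀K, hN₀⟩ := hs2p
          refine ⟨u1, fun M hM => ?_⟩
          rcases hcl M hM with rfl | rfl | rfl | rfl | rfl | rfl | rfl | rfl
          · exact conj_one u1
          · exact conj_neg_one u1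
          · exfalso
            rcases hN₀ with rfl | rfl
            · exact hexcl _ (mul_mem hM hN₀K) (Or.inl (by decide))
            · exact hexcl _ (mul_mem hM hN₀K) (Or.inr (Or.inl (by decide)))
          · exfalso
            rcases hN₀ with rfl | rfl
            · exact hexcl _ (mul_mem hM hN₀K) (Or.inr (Or.inl (by decide)))
            · exact hexcl _ (mul_mem hM hN₀K) (Or.inl (by decide))
          · exact absurd ⟨_, hM, Or.inl rfl⟩ hs2
          · exact absurd ⟨_, hM, Or.inr rfl⟩ hs2
          · rw [show u1⁻¹ * s2pU * u1 = matS by decide]; exact memS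
          · rw [show u1⁻¹ * (-s2pU) * u1 = -matS by decide]; exact memNS
        · refine ⟨1, fun M hM => ?_⟩
          rcases hcl M hM with rfl | rfl | rfl | rfl | rfl | rfl | rfl | rfl
          · exact conj_one 1
          · exact conj_neg_one 1
          · simpa using memS
          · simpa using memNS
          · exact absurd ⟨_, hM, Or.inl rfl⟩ hs2
          · exact absurd ⟨_, hM, Or.inr rfl⟩ hs2
          · exact absurd ⟨_, hM, Or.inl rfl⟩ hs2p
          · exact absurd ⟨_, hM, Or.inr rfl⟩ hs2p
    · -- a = 2b, a < c
      refine ⟨u0, fun M hM => ?_⟩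
      rcases classify a b c ha hb0 hba hac hD M (hfix M hM) with
        rfl | rfl | ⟨hb, _⟩ | ⟨hcc, _⟩ | ⟨hb, _, _⟩ | ⟨_, rfl | rfl⟩ | ⟨_, hcc, _⟩ | ⟨_, hcc, _⟩
      · exact conj_one u0
      · exact conj_neg_one u0
      · exact absurd hb hbne
      · exact absurd hcc hc
      · exact absurd hb hbne
      · rw [show u0⁻¹ * s2U * u0 = matS by decide]; exact memS
      · rw [show u0⁻¹ * (-s2U) * u0 = -matS by decide]; exact memNS
      · exact absurd hcc hc
      · exact absurd hcc hc
  · -- a ≠ 2b : everything already in G2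
    refine ⟨1, fun M hM => ?_⟩
    have hin : M ∈ G2 := by
      rcases classify a b c ha hb0 hba hac hD M (hfix M hM) with
        rfl | rfl | ⟨_, rfl | rfl⟩ | ⟨_, rfl | rfl⟩ | ⟨_, _, rfl | rfl⟩ |
        ⟨hb2, _⟩ | ⟨hb2, _, _⟩ | ⟨hb2, _, _⟩
      · exact one_mem G2
      · exact memN1
      · exact memNR
      · exact memR
      · exact memS
      · exact memNS
      · exact memRot
      · exact memNRot
      · exact absurd hb2 h2b
      · exact absurd hb2 h2b
      · exact absurd hb2 h2b
    simpa using hin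















lemma fix_conj (F : Matrix (Fin 2) (Fin 2) ℤ) (g h : GL (Fin 2) ℤ)
    (hf : (h.val)ᵀ * F * h.val = F) :
    ((g⁻¹*h*g).val)ᵀ * ((g.val)ᵀ * F * g.val) * (g⁻¹*h*g).val = (g.val)ᵀ * F * g.val := by
  have h1 : ((g⁻¹).val) * g.val = 1 := by rw [← Units.val_mul]; simp
  have h2 : g.val * ((g⁻¹).val) = 1 := by rw [← Units.val_mul]; simp
  have e1 : ∀ X : Matrix (Fin 2) (Fin 2) ℤ, g.val * (((g⁻¹).val) * X) = X := fun X => by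
    rw [← Matrix.mul_assoc, h2, Matrix.one_mul]
  have e2 : ∀ X : Matrix (Fin 2) (Fin 2) ℤ, (((g⁻¹).val)ᵀ) * ((g.val)ᵀ * X) = X := fun X => by
    rw [← Matrix.mul_assoc, ← Matrix.transpose_mul, h2, Matrix.transpose_one, Matrix.one_mul]
  have e3 : ∀ X : Matrix (Fin 2) (Fin 2) ℤ, (h.val)ᵀ * (F * (h.val * X)) = F * X := fun X => by
    rw [← Matrix.mul_assoc, ← Matrix.mul_assoc, hf]
  simp only [Units.val_mul, Matrix.transpose_mul, Matrix.mul_assoc]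
  rw [e1, e2, e3]

theorem part2 : ∀ H : Subgroup (GL (Fin 2) ℤ), Finite H → IsPGroup 2 H →
    ∃ g : GL (Fin 2) ℤ, Subgroup.map (MulAut.conj g).toMonoidHom H ≤ G2 := by
  intro H hFin hpg
  haveI : Fintype H := Fintype.ofFinite _
  set A : Matrix (Fin 2) (Fin 2) ℤ :=
    ∑ h : H, ((h : GL (Fin 2) ℤ).val)ᵀ * (h : GL (Fin 2) ℤ).val with hA
  -- invariance
  have hinv : ∀ h : H, ((h : GL (Fin 2) ℤ).val)ᵀ * A * (h : GL (Fin 2) ℤ).val = A := by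
    intro g
    rw [hA, Finset.mul_sum, Finset.sum_mul]
    refine Fintype.sum_equiv (Equiv.mulRight g) _ _ (fun h => ?_)
    simp only [Equiv.coe_mulRight, Subgroup.coe_mul, Units.val_mul, Matrix.transpose_mul]
    noncomm_ring
  -- entries
  have hent : ∀ (h : H) (i j : Fin 2),
      ((((h : GL (Fin 2) ℤ).val)ᵀ) * (h : GL (Fin 2) ℤ).val) i j
        = (h : GL (Fin 2) ℤ).val 0 i * (h : GL (Fin 2) ℤ).val 0 j
          + (h : GL (Fin 2) ℤ).val 1 i * (h : GL (Fin 2) ℤ).val 1 j := by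
    intro h i j; simp [Matrix.mul_apply, Fin.sum_univ_two]
  have hAapp : ∀ i j, A i j = ∑ h : H,
      ((h : GL (Fin 2) ℤ).val 0 i * (h : GL (Fin 2) ℤ).val 0 j
        + (h : GL (Fin 2) ℤ).val 1 i * (h : GL (Fin 2) ℤ).val 1 j) := by
    intro i j; rw [hA, Matrix.sum_apply]
    exact Finset.sum_congr rfl (fun h _ => hent h i j)
  have hqf : ∀ x y : ℤ, A 0 0 * x * x + 2 * (A 0 1) * x * y + A 1 1 * y * y
      = ∑ h : H, (((h : GL (Fin 2) ℤ).val 0 0 * x + (h : GL (Fin 2) ℤ).val 0 1 * y)^2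
          + ((h : GL (Fin 2) ℤ).val 1 0 * x + (h : GL (Fin 2) ℤ).val 1 1 * y)^2) := by
    intro x y
    have h1 : A 0 0 * x * x = ∑ h : H,
        (((h : GL (Fin 2) ℤ).val 0 0 * (h : GL (Fin 2) ℤ).val 0 0
          + (h : GL (Fin 2) ℤ).val 1 0 * (h : GL (Fin 2) ℤ).val 1 0) * x * x) := by
      rw [hAapp 0 0, Finset.sum_mul, Finset.sum_mul]
    have h2 : 2 * (A 0 1) * x * y = ∑ h : H,
        (2 * ((h : GL (Fin 2) ℤ).val 0 0 * (h : GL (Fin 2) ℤ).val 0 1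
          + (h : GL (Fin 2) ℤ).val 1 0 * (h : GL (Fin 2) ℤ).val 1 1) * x * y) := by
      rw [hAapp 0 1, Finset.mul_sum, Finset.sum_mul, Finset.sum_mul]
    have h3 : A 1 1 * y * y = ∑ h : H,
        (((h : GL (Fin 2) ℤ).val 0 1 * (h : GL (Fin 2) ℤ).val 0 1
          + (h : GL (Fin 2) ℤ).val 1 1 * (h : GL (Fin 2) ℤ).val 1 1) * y * y) := by
      rw [hAapp 1 1, Finset.sum_mul, Finset.sum_mul]
    rw [h1, h2, h3, ← Finset.sum_add_distrib, ← Finset.sum_add_distrib]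
    exact Finset.sum_congr rfl (fun h _ => by ring)
  have hposQ : ∀ x y : ℤ, ¬(x = 0 ∧ y = 0) →
      0 < A 0 0 * x * x + 2 * (A 0 1) * x * y + A 1 1 * y * y := by
    intro x y hxy
    rw [hqf]
    refine Finset.sum_pos' (fun h _ => by positivity) ⟨1, Finset.mem_univ _, ?_⟩
    have hone : ((1 : H) : GL (Fin 2) ℤ).val = (1 : Matrix (Fin 2) (Fin 2) ℤ) := by
      simp
    rw [hone]
    simp [Matrix.one_apply]
    have hx : x ≠ 0 ∨ y ≠ 0 := by tauto
    rcases hx with hx | hx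
    · nlinarith [mul_self_pos.mpr hx, sq_nonneg y, sq_nonneg x]
    · nlinarith [mul_self_pos.mpr hx, sq_nonneg y, sq_nonneg x]
  have ha : 0 < A 0 0 := by
    have := hposQ 1 0 (by norm_num); nlinarith [this]
  have hD : 0 < A 0 0 * A 1 1 - A 0 1 * A 0 1 := by
    have h0 := hposQ (A 0 1) (-(A 0 0)) (fun hcon => by omega)
    nlinarith [h0, ha]
  have hfixF : ∀ h : H, ((h : GL (Fin 2) ℤ).val)ᵀ * !![A 0 0, A 0 1; A 0 1, A 1 1]
      * (h : GL (Fin 2) ℤ).val = !![A 0 0, A 0 1; A 0 1, A 1 1] := by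
    have hsym : A 1 0 = A 0 1 := by
      rw [hAapp 1 0, hAapp 0 1]; exact Finset.sum_congr rfl (fun h _ => by ring)
    have hAeq : A = !![A 0 0, A 0 1; A 0 1, A 1 1] := by
      conv_lhs => rw [Matrix.eta_fin_two A]
      rw [hsym]
    intro h
    rw [← hAeq]; exact hinv h
  -- reduction (with a pre-swap if needed)
  obtain ⟨G, a', b', c', hred, h1', h2', h3', h4'⟩ :
      ∃ (G : GL (Fin 2) ℤ) (a' b' c' : ℤ),
        (G.val)ᵀ * !![A 0 0, A 0 1; A 0 1, A 1 1] * G.val = !![a',b';b',c'] ∧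
        0 < a' ∧ 0 ≤ 2*b' ∧ 2*b' ≤ a' ∧ a' ≤ c' := by
    rcases le_total (A 0 0) (A 1 1) with hle | hle
    · obtain ⟨g, a', b', c', hg, h1, h2, h3, h4⟩ :=
        reduce ((A 0 0 + A 1 1).toNat) (A 0 0) (A 0 1) (A 1 1) ha hD hle le_rfl
      exact ⟨g, a', b', c', hg, h1, h2, h3, h4⟩
    · have hc : 0 < A 1 1 := by
        have := hposQ 0 1 (by norm_num); nlinarith [this]
      obtain ⟨g, a', b', c', hg, h1, h2, h3, h4⟩ :=
        reduce ((A 1 1 + A 0 0).toNat) (A 1 1) (A 0 1) (A 0 0) hc (by nlinarith [hD]) hle le_rfl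
      refine ⟨matS * g, a', b', c', ?_, h1, h2, h3, h4⟩
      rw [congr_mul, congr_matS, hg]
  -- determinant of reduced form
  have hD' : 0 < a' * c' - b' * b' := by
    have hdet1 : (!![a',b';b',c'] : Matrix (Fin 2) (Fin 2) ℤ).det
        = ((G.val)ᵀ).det * (!![A 0 0, A 0 1; A 0 1, A 1 1] : Matrix (Fin 2) (Fin 2) ℤ).det
          * (G.val).det := by
      rw [← hred, Matrix.det_mul, Matrix.det_mul]
    rw [Matrix.det_transpose] at hdet1
    rw [Matrix.det_fin_two_of, Matrix.det_fin_two_of] at hdet1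
    rcases Int.isUnit_iff.mp ((Matrix.isUnit_iff_isUnit_det _).mp G.isUnit) with h | h <;>
      rw [h] at hdet1 <;> nlinarith [hdet1, hD]
  -- conjugated subgroup
  set K : Subgroup (GL (Fin 2) ℤ) := Subgroup.map (MulAut.conj G⁻¹).toMonoidHom H with hK
  have hpK : IsPGroup 2 K := hpg.map _
  have hfixK : ∀ M ∈ K, (M : GL (Fin 2) ℤ).valᵀ * !![a',b';b',c']
      * (M : GL (Fin 2) ℤ).val = !![a',b';b',c'] := by
    intro M hM
    obtain ⟨h, hh, rfl⟩ := hM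
    have : (MulAut.conj G⁻¹).toMonoidHom h = G⁻¹ * (h : GL (Fin 2) ℤ) * G := by
      simp [MulAut.conj_apply]
    rw [this, ← hred]
    exact fix_conj _ G h (hfixF ⟨h, hh⟩)
  obtain ⟨u, hu⟩ := endgame a' b' c' h1' h2' h3' h4' hD' K hpK hfixK
  refine ⟨(G * u)⁻¹, ?_⟩
  intro x hx
  obtain ⟨h, hh, rfl⟩ := hx
  have hKmem : (G⁻¹ * h * G) ∈ K := by
    refine ⟨h, hh, ?_⟩
    simp [MulAut.conj_apply]
  have hmem := hu _ hKmem
  have heq : (MulAut.conj (G * u)⁻¹).toMonoidHom h = u⁻¹ * (G⁻¹ * h * G) * u := by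
    simp [MulAut.conj_apply]
  rw [heq]
  exact hmem

/-- `𝒢₂` is dihedral of order `8`, and every finite `2`-subgroup of
`GL₂(ℤ)` is conjugate in `GL₂(ℤ)` to a subgroup of `𝒢₂`. -/
theorem stmt7 :
    Nonempty (G2 ≃* DihedralGroup 4) ∧
    ∀ H : Subgroup (GL (Fin 2) ℤ), Finite H → IsPGroup 2 H →
      ∃ g : GL (Fin 2) ℤ, Subgroup.map (MulAut.conj g).toMonoidHom H ≤ G2 := by
  exact ⟨part1, part2⟩
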